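/- Every metrizable indecomposable continuum with more than one point has a dense subset that is widely-connected. -/

import Mathlib

universe u

open Set

/-- A continuum is indecomposable if it is not the union of two proper subcontinua. -/
def Indecomposable (X : Type u) [TopologicalSpace X] : Prop :=
  ¬ ∃ A B : Set X, IsCompact A ∧ IsConnected A ∧ A ≠ univ ∧
      IsCompact B ∧ IsConnected B ∧ B ≠ univ ∧ A ∪ B = univ

/-- A subset `W` of a space is widely-connected if it is connected and every
connected subset of `W` with more than one point is dense in `W`. -/
def WidelyConnectedSubset {X : Type u} [TopologicalSpace X] (W : Set X) : Prop :=
  IsConnected W ∧ ∀ A ⊆ W, A.Nontrivial → IsPreconnected A → W ⊆ closure A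

set_option linter.unusedSectionVars false
namespace IndecompAux

variable {X : Type u} [TopologicalSpace X] [CompactSpace X] [T2Space X]

lemma isClosed_ccIn {F : Set X} (hF : IsClosed F) (x : X) :
    IsClosed (connectedComponentIn F x) := by
  by_cases hx : x ∈ F
  · rw [connectedComponentIn_eq_image hx]
    haveI : CompactSpace F := isCompact_iff_compactSpace.mp hF.isCompact
    exact ((isClosed_connectedComponent.isCompact).image continuous_subtype_val).isClosed
  · rw [connectedComponentIn_eq_empty hx]; exact isClosed_empty

lemma exists_clopenIn {F G : Set X} (hF : IsClosed F) {x : X} (hx : x ∈ F)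
    (hG : IsClosed G) (hdis : Disjoint (connectedComponentIn F x) G) :
    ∃ E O : Set X, IsOpen O ∧ E = F ∩ O ∧ IsClosed E ∧ x ∈ E ∧ Disjoint E G ∧
      ∀ y ∈ E, connectedComponentIn F y ⊆ E := by
  haveI : CompactSpace F := isCompact_iff_compactSpace.mp hF.isCompact
  set G' : Set F := (↑) ⁻¹' G with hG'
  have hG'c : IsCompact G' := (hG.preimage continuous_subtype_val).isCompact
  have hinter : (G' ∩ ⋂ s : { s : Set F // IsClopen s ∧ (⟨x, hx⟩ : F) ∈ s }, (s : Set F)) = ∅ := by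
    rw [← connectedComponent_eq_iInter_isClopen]
    apply eq_empty_of_forall_notMem
    rintro a ⟨haG, hacc⟩
    exact hdis.ne_of_mem (by
      rw [connectedComponentIn_eq_image hx]; exact ⟨a, hacc, rfl⟩) haG rfl
  obtain ⟨u, hu⟩ := hG'c.elim_finite_subfamily_closed _
    (fun s : { s : Set F // IsClopen s ∧ (⟨x, hx⟩ : F) ∈ s } => s.2.1.isClosed) hinter
  set E' : Set F := ⋂ s ∈ u, (s : Set F) with hE'
  have hE'clopen : IsClopen E' := isClopen_biInter_finset (fun s _ => s.2.1)
  have hxE' : (⟨x, hx⟩ : F) ∈ E' := by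
    rw [hE']; exact mem_iInter₂.mpr fun s _ => s.2.2
  obtain ⟨O, hO, hOE⟩ := isOpen_induced_iff.mp hE'clopen.isOpen
  refine ⟨(↑) '' E', O, hO, ?_, ?_, ⟨⟨x, hx⟩, hxE', rfl⟩, ?_, ?_⟩
  · rw [← hOE, Subtype.image_preimage_coe, inter_comm]
  · exact ((hE'clopen.isClosed.isCompact).image continuous_subtype_val).isClosed
  · rw [disjoint_left]
    rintro a ⟨b, hb, rfl⟩ haG
    have hb' : b ∈ G' ∩ E' := ⟨haG, hb⟩
    rw [hu] at hb'
    exact hb'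
  · rintro y ⟨b, hb, rfl⟩
    intro z hz
    have hyF : (b : X) ∈ F := b.2
    rw [connectedComponentIn_eq_image hyF] at hz
    obtain ⟨c, hc, rfl⟩ := hz
    refine ⟨c, ?_, rfl⟩
    have : connectedComponent (⟨(b : X), hyF⟩ : F) ⊆ E' :=
      isPreconnected_connectedComponent.subset_isClopen hE'clopen
        ⟨⟨(b : X), hyF⟩, mem_connectedComponent, by simpa using hb⟩
    exact this hc


lemma ccIn_meets [ConnectedSpace X] {F G : Set X} (hF : IsClosed F) (hG : IsClosed G)
    (hFG : F ∪ G = univ) (hGne : G.Nonempty) {x : X} (hx : x ∈ F) :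
    (connectedComponentIn F x ∩ G).Nonempty := by
  by_contra h
  have hdis : Disjoint (connectedComponentIn F x) G := by
    rw [disjoint_iff_inter_eq_empty]
    exact not_nonempty_iff_eq_empty.mp h
  obtain ⟨E, O, hO, hEFO, hEc, hxE, hEG, -⟩ := exists_clopenIn hF hx hG hdis
  have hEopen : E = O ∩ Gᶜ := by
    apply Subset.antisymm
    · intro y hy
      exact ⟨(hEFO ▸ hy).2, disjoint_left.mp hEG hy⟩
    · rintro y ⟨hyO, hyG⟩
      have hyF : y ∈ F := by
        rcases (hFG ▸ mem_univ y : y ∈ F ∪ G) with h' | h'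
        · exact h'
        · exact absurd h' hyG
      rw [hEFO]; exact ⟨hyF, hyO⟩
  have hclopen : IsClopen E := ⟨hEc, hEopen ▸ hO.inter hG.isOpen_compl⟩
  rcases isClopen_iff.mp hclopen with h' | h'
  · exact absurd (h' ▸ hxE) (notMem_empty x)
  · obtain ⟨g, hg⟩ := hGne
    exact disjoint_left.mp hEG (h' ▸ mem_univ g) hg

lemma interior_empty_of_proper [ConnectedSpace X] (hX : Indecomposable X) {K : Set X}
    (hKc : IsCompact K) (hKconn : IsConnected K) (hKne : K ≠ univ) :
    interior K = ∅ := by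
  by_contra hint
  obtain ⟨w, hw⟩ := nonempty_iff_ne_empty.mpr hint
  obtain ⟨p, hp⟩ := (ne_univ_iff_exists_notMem K).mp hKne
  set D : Set X := (interior K)ᶜ with hD
  have hDc : IsClosed D := isOpen_interior.isClosed_compl
  have hpD : p ∈ D := fun h => hp (interior_subset h)
  have hcover : D ∪ K = univ := by
    apply eq_univ_of_forall
    intro y
    by_cases hy : y ∈ interior K
    · exact Or.inr (interior_subset hy)
    · exact Or.inl hy
  have hKcl : IsClosed K := hKc.isClosed
  have hKn : K.Nonempty := hKconn.1
  have hcomp : ∀ y ∈ D, (connectedComponentIn D y ∩ K).Nonempty := fun y hy =>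
    ccIn_meets hDc hKcl hcover hKn hy
  -- basic facts about components of D
  have hccIsCont : ∀ y ∈ D, IsCompact (connectedComponentIn D y) ∧
      IsConnected (connectedComponentIn D y) := by
    intro y hy
    exact ⟨(isClosed_ccIn hDc y).isCompact,
      ⟨⟨y, mem_connectedComponentIn hy⟩, isPreconnected_connectedComponentIn⟩⟩
  have hwD : w ∉ D := fun h => h hw
  by_cases hC : K ∪ connectedComponentIn D p = univ
  · refine hX ⟨K, connectedComponentIn D p, hKc, hKconn, hKne, (hccIsCont p hpD).1,
      (hccIsCont p hpD).2, ?_, hC⟩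
    intro h
    exact hwD (h ▸ mem_univ w |> fun hcc => connectedComponentIn_subset D p hcc)
  · obtain ⟨z, hz⟩ := (ne_univ_iff_exists_notMem _).mp hC
    have hzK : z ∉ K := fun h => hz (Or.inl h)
    have hzD : z ∈ D := fun h => hzK (interior_subset h)
    have hzC : z ∉ connectedComponentIn D p := fun h => hz (Or.inr h)
    have hdis : Disjoint (connectedComponentIn D p) {z} := by
      rw [disjoint_singleton_right]; exact hzC
    obtain ⟨E, O, hO, hEDO, hEc, hpE, hEz, hEcomp⟩ :=
      exists_clopenIn hDc hpD isClosed_singleton hdis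
    have hzE : z ∉ E := fun h => disjoint_left.mp hEz h rfl
    have hED : E ⊆ D := hEDO ▸ inter_subset_left
    have hDEc : IsClosed (D \ E) := by
      have hde : D \ E = D ∩ Oᶜ := by
        rw [hEDO]; ext y
        simp only [mem_diff, mem_inter_iff, mem_compl_iff]; tauto
      rw [hde]; exact hDc.inter (isClosed_compl_iff.mpr hO)
    have hDEcomp : ∀ y ∈ D \ E, connectedComponentIn D y ⊆ D \ E := by
      intro y hy q hq
      refine ⟨connectedComponentIn_subset D y hq, fun hqE => ?_⟩
      have hsub : connectedComponentIn D q ⊆ E := hEcomp q hqE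
      have heq : connectedComponentIn D y = connectedComponentIn D q := connectedComponentIn_eq hq
      exact hy.2 (hsub (heq ▸ mem_connectedComponentIn hy.1))
    have hunion : ∀ E' : Set X, E' ⊆ D → E'.Nonempty →
        (∀ y ∈ E', connectedComponentIn D y ⊆ E') → IsConnected (K ∪ E') := by
      rintro E' hE'D ⟨e₀, he₀⟩ hcl
      have hrw : K ∪ E' = ⋃₀ ((fun e => K ∪ connectedComponentIn D e) '' E') := by
        apply Subset.antisymm
        · rintro y (hyK | hyE)
          · exact ⟨K ∪ connectedComponentIn D e₀, ⟨e₀, he₀, rfl⟩, Or.inl hyK⟩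
          · exact ⟨K ∪ connectedComponentIn D y, ⟨y, hyE, rfl⟩,
              Or.inr (mem_connectedComponentIn (hE'D hyE))⟩
        · rintro y ⟨s, ⟨e, he, rfl⟩, hy⟩
          rcases hy with h | h
          · exact Or.inl h
          · exact Or.inr (hcl e he h)
      rw [hrw]
      obtain ⟨k₀, hk₀⟩ := hKn
      refine ⟨⟨k₀, K ∪ connectedComponentIn D e₀, ⟨e₀, he₀, rfl⟩, Or.inl hk₀⟩, ?_⟩
      apply isPreconnected_sUnion k₀
      · rintro s ⟨e, he, rfl⟩; exact Or.inl hk₀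
      · rintro s ⟨e, he, rfl⟩
        obtain ⟨q, hq⟩ := hcomp e (hE'D he)
        exact (IsConnected.union ⟨q, hq.2, hq.1⟩ hKconn (hccIsCont e (hE'D he)).2).isPreconnected
    have hAconn : IsConnected (K ∪ E) := hunion E hED ⟨p, hpE⟩ hEcomp
    have hBconn : IsConnected (K ∪ (D \ E)) := by
      rcases eq_empty_or_nonempty (D \ E) with h | h
      · rw [h, union_empty]; exact hKconn
      · exact hunion _ diff_subset h hDEcomp
    have hAne : K ∪ E ≠ univ := by
      intro h
      rcases (h ▸ mem_univ z : z ∈ K ∪ E) with h' | h'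
      exacts [hzK h', hzE h']
    have hBne : K ∪ (D \ E) ≠ univ := by
      intro h
      rcases (h ▸ mem_univ p : p ∈ K ∪ (D \ E)) with h' | h'
      exacts [hp h', h'.2 hpE]
    have hABu : (K ∪ E) ∪ (K ∪ (D \ E)) = univ := by
      apply eq_univ_of_forall
      intro y
      rcases (hcover ▸ mem_univ y : y ∈ D ∪ K) with hyD | hyK
      · by_cases hyE : y ∈ E
        · exact Or.inl (Or.inr hyE)
        · exact Or.inr (Or.inr ⟨hyD, hyE⟩)
      · exact Or.inl (Or.inl hyK)
    exact hX ⟨K ∪ E, K ∪ (D \ E), hKc.union hEc.isCompact, hAconn, hAne,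
      hKc.union hDEc.isCompact, hBconn, hBne, hABu⟩


/-- The composant relation. -/
def Rel (X : Type u) [TopologicalSpace X] (x y : X) : Prop :=
  ∃ K : Set X, IsCompact K ∧ IsConnected K ∧ K ≠ univ ∧ x ∈ K ∧ y ∈ K

lemma Rel.refl [T1Space X] [Nontrivial X] (x : X) : Rel X x x := by
  obtain ⟨y, hy⟩ := exists_ne x
  exact ⟨{x}, isCompact_singleton, isConnected_singleton, by
    intro h; exact hy (by rw [← mem_singleton_iff, h]; exact mem_univ y), rfl, rfl⟩

lemma Rel.symm {x y : X} (h : Rel X x y) : Rel X y x := by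
  obtain ⟨K, h1, h2, h3, h4, h5⟩ := h
  exact ⟨K, h1, h2, h3, h5, h4⟩

lemma Rel.trans (hX : Indecomposable X) {x y z : X} (h1 : Rel X x y) (h2 : Rel X y z) :
    Rel X x z := by
  obtain ⟨K, hK1, hK2, hK3, hK4, hK5⟩ := h1
  obtain ⟨L, hL1, hL2, hL3, hL4, hL5⟩ := h2
  refine ⟨K ∪ L, hK1.union hL1, IsConnected.union ⟨y, hK5, hL4⟩ hK2 hL2, ?_,
    Or.inl hK4, Or.inr hL5⟩
  intro h
  exact hX ⟨K, L, hK1, hK2, hK3, hL1, hL2, hL3, h⟩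

lemma rel_into_open [ConnectedSpace X] [Nontrivial X] (x : X) {U : Set X}
    (hU : IsOpen U) (hUne : U.Nonempty) : ∃ u ∈ U, Rel X x u := by
  by_cases hxU : x ∈ U
  · exact ⟨x, hxU, Rel.refl x⟩
  · obtain ⟨u₀, hu₀⟩ := hUne
    obtain ⟨V, hV, hu₀V, hVU⟩ :=
      normal_exists_closure_subset isClosed_singleton hU (singleton_subset_iff.mpr hu₀)
    have hxV : x ∈ Vᶜ := fun h => hxU (hVU (subset_closure h))
    have hcover : Vᶜ ∪ closure V = univ := by
      apply eq_univ_of_forall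
      intro y
      by_cases hy : y ∈ V
      · exact Or.inr (subset_closure hy)
      · exact Or.inl hy
    obtain ⟨z, hz1, hz2⟩ := ccIn_meets (isClosed_compl_iff.mpr hV) isClosed_closure hcover
      ⟨u₀, subset_closure (hu₀V rfl)⟩ hxV
    refine ⟨z, hVU hz2, ?_⟩
    refine ⟨connectedComponentIn Vᶜ x, (isClosed_ccIn (isClosed_compl_iff.mpr hV) x).isCompact,
      ⟨⟨x, mem_connectedComponentIn hxV⟩, isPreconnected_connectedComponentIn⟩, ?_,
      mem_connectedComponentIn hxV, hz1⟩
    intro h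
    exact (connectedComponentIn_subset Vᶜ x (h ▸ mem_univ (u₀ : X))) (hu₀V rfl)

lemma rel_separator [ConnectedSpace X] [Nontrivial X] (hX : Indecomposable X) (x : X)
    {U V : Set X} (hU : IsOpen U) (hV : IsOpen V) (hUne : U.Nonempty) (hVne : V.Nonempty)
    (hUV : Disjoint U V) : ∃ z, Rel X x z ∧ z ∉ U ∪ V := by
  obtain ⟨u, huU, hxu⟩ := rel_into_open x hU hUne
  have huF : u ∈ Vᶜ := fun h => disjoint_left.mp hUV huU h
  have hcover : Vᶜ ∪ closure V = univ := by
    apply eq_univ_of_forall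
    intro y
    by_cases hy : y ∈ V
    · exact Or.inr (subset_closure hy)
    · exact Or.inl hy
  obtain ⟨z, hz1, hz2⟩ := ccIn_meets (isClosed_compl_iff.mpr hV) isClosed_closure hcover
    (hVne.mono subset_closure) huF
  have hzV : z ∉ V := connectedComponentIn_subset Vᶜ u hz1
  have hzU : z ∉ U := by
    intro hzU
    have : closure V ⊆ Uᶜ := closure_minimal (fun a ha hb => disjoint_left.mp hUV hb ha) hU.isClosed_compl
    exact this hz2 hzU
  have hrel : Rel X u z := by
    obtain ⟨v, hv⟩ := hVne
    refine ⟨connectedComponentIn Vᶜ u, (isClosed_ccIn (isClosed_compl_iff.mpr hV) u).isCompact,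
      ⟨⟨u, mem_connectedComponentIn huF⟩, isPreconnected_connectedComponentIn⟩, ?_,
      mem_connectedComponentIn huF, hz1⟩
    intro h
    exact (connectedComponentIn_subset Vᶜ u (h ▸ mem_univ v)) hv
  exact ⟨z, hxu.trans hX hrel, fun h => h.elim hzU hzV⟩


/-- The relation "y lies in the connected component of x inside F". -/
def relSet (F : Set X) : Set (X × X) :=
  {p | p.1 ∈ F ∧ p.2 ∈ connectedComponentIn F p.1}

lemma isClosed_relSet {F : Set X} (hF : IsClosed F) : IsClosed (relSet F) := by
  haveI : CompactSpace F := isCompact_iff_compactSpace.mp hF.isCompact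
  set Rel' : Set (F × F) := {p | p.2 ∈ connectedComponent p.1} with hRel'
  have himage : relSet F = (fun p : F × F => ((p.1 : X), (p.2 : X))) '' Rel' := by
    ext ⟨a, b⟩
    constructor
    · rintro ⟨ha, hb⟩
      rw [connectedComponentIn_eq_image ha] at hb
      obtain ⟨c, hc, rfl⟩ := hb
      exact ⟨(⟨a, ha⟩, c), hc, rfl⟩
    · rintro ⟨⟨q, r⟩, hqr, heq⟩
      obtain ⟨h1, h2⟩ := Prod.mk.injEq .. ▸ heq
      subst h1; subst h2
      refine ⟨q.2, ?_⟩
      rw [connectedComponentIn_eq_image q.2]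
      exact ⟨r, by simpa [hRel'] using hqr, rfl⟩
  have hRclosed : IsClosed Rel' := by
    have : Rel' = ⋂ E : {E : Set F // IsClopen E}, ((E : Set F) ×ˢ ((E : Set F))ᶜ)ᶜ := by
      ext ⟨a, b⟩
      simp only [mem_iInter, mem_compl_iff, mem_prod, mem_setOf_eq, not_and, not_not, hRel']
      constructor
      · intro h E haE
        exact isPreconnected_connectedComponent.subset_isClopen E.2
          ⟨a, mem_connectedComponent, haE⟩ h
      · intro h
        rw [connectedComponent_eq_iInter_isClopen a]
        exact mem_iInter.mpr fun s => h ⟨s.1, s.2.1⟩ s.2.2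
    rw [this]
    exact isClosed_iInter fun E => isClosed_compl_iff.mpr (E.2.2.prod E.2.1.isOpen_compl)
  rw [himage]
  exact ((hRclosed.isCompact).image
    ((continuous_subtype_val.comp continuous_fst).prodMk
      (continuous_subtype_val.comp continuous_snd))).isClosed

lemma interior_relSet [ConnectedSpace X] (hX : Indecomposable X) {F : Set X}
    (hF : IsClosed F) (hFne : Fᶜ.Nonempty) : interior (relSet F) = ∅ := by
  apply eq_empty_of_forall_notMem
  rintro ⟨a, b⟩ hab
  obtain ⟨P, Q, hP, hQ, haP, hbQ, hPQ⟩ :=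
    isOpen_prod_iff.mp isOpen_interior a b hab
  have hmem : (a, b) ∈ relSet F := interior_subset hab
  have hQsub : Q ⊆ connectedComponentIn F a := by
    intro q hq
    exact (hPQ (mk_mem_prod haP hq) |> interior_subset).2
  obtain ⟨w, hw⟩ := hFne
  have hint : interior (connectedComponentIn F a) = ∅ := by
    refine interior_empty_of_proper hX (isClosed_ccIn hF a).isCompact
      ⟨⟨a, mem_connectedComponentIn hmem.1⟩, isPreconnected_connectedComponentIn⟩ ?_
    intro h
    exact hw (connectedComponentIn_subset F a (h ▸ mem_univ w))
  have : b ∈ interior (connectedComponentIn F a) :=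
    mem_interior.mpr ⟨Q, hQsub, hQ, hbQ⟩
  rw [hint] at this
  exact this


section Fusion

variable (S : ℕ → Set (X × X))

lemma avoid {α : Type*} [DecidableEq α] (hScl : ∀ n, IsClosed (S n))
    (hSint : ∀ n, interior (S n) = ∅)
    (T : Finset (α × α × ℕ)) (hT : ∀ c ∈ T, c.1 ≠ c.2.1)
    (W : α → Set X) (hWo : ∀ a, IsOpen (W a)) (hWne : ∀ a, (W a).Nonempty) :
    ∃ W' : α → Set X, (∀ a, IsOpen (W' a)) ∧ (∀ a, (W' a).Nonempty) ∧ (∀ a, W' a ⊆ W a) ∧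
      ∀ c ∈ T, Disjoint (W' c.1 ×ˢ W' c.2.1) (S c.2.2) := by
  classical
  revert hT
  refine Finset.induction_on T ?_ ?_
  · intro _
    exact ⟨W, hWo, hWne, fun a => Subset.rfl, fun c hc => absurd hc (Finset.notMem_empty c)⟩
  · rintro ⟨a, b, k⟩ T' hnotmem ih hT
    obtain ⟨W', h1, h2, h3, h4⟩ := ih (fun c hc => hT c (Finset.mem_insert_of_mem hc))
    have hab : a ≠ b := hT _ (Finset.mem_insert_self _ _)
    have hnsub : ¬ (W' a ×ˢ W' b ⊆ S k) := by
      intro hsub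
      have hsub2 : W' a ×ˢ W' b ⊆ interior (S k) :=
        interior_maximal hsub ((h1 a).prod (h1 b))
      rw [hSint k] at hsub2
      obtain ⟨q, hq⟩ := (h2 a).prod (h2 b)
      exact hsub2 hq
    obtain ⟨q, hqW, hqS⟩ := not_subset.mp hnsub
    obtain ⟨u, v, hu, hv, hq1, hq2, huv⟩ :=
      isOpen_prod_iff.mp (isOpen_compl_iff.mpr (hScl k)) q.1 q.2 (by simpa using hqS)
    set W'' : α → Set X := fun x => if x = a then W' a ∩ u else if x = b then W' b ∩ v else W' x
      with hW''
    have hWa : W'' a = W' a ∩ u := by simp [hW'']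
    have hWb : W'' b = W' b ∩ v := by simp [hW'', Ne.symm hab]
    have hW''sub : ∀ x, W'' x ⊆ W' x := by
      intro x; rw [hW'']; dsimp only
      split_ifs with h h'
      · subst h; exact inter_subset_left
      · subst h'; exact inter_subset_left
      · exact Subset.rfl
    have hW''o : ∀ x, IsOpen (W'' x) := by
      intro x; rw [hW'']; dsimp only
      split_ifs with h h'
      · exact (h1 a).inter hu
      · exact (h1 b).inter hv
      · exact h1 x
    have hW''ne : ∀ x, (W'' x).Nonempty := by
      intro x; rw [hW'']; dsimp only
      split_ifs with h h'
      · exact ⟨q.1, hqW.1, hq1⟩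
      · exact ⟨q.2, hqW.2, hq2⟩
      · exact h2 x
    refine ⟨W'', hW''o, hW''ne, fun x => (hW''sub x).trans (h3 x), ?_⟩
    rintro c hc
    rcases Finset.mem_insert.mp hc with rfl | hc'
    · show Disjoint (W'' a ×ˢ W'' b) (S k)
      rw [hWa, hWb]
      refine Set.disjoint_left.mpr ?_
      rintro ⟨p1, p2⟩ ⟨hp1, hp2⟩ hpS
      exact (huv (mk_mem_prod hp1.2 hp2.2)) hpS
    · exact (h4 c hc').mono_left (prod_mono (hW''sub c.1) (hW''sub c.2.1))

/-- A good family of open sets at level `n`. -/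
def GoodFam (n : ℕ) (V : (Fin n → Bool) → Set X) : Prop :=
  (∀ σ, IsOpen (V σ)) ∧ (∀ σ, (V σ).Nonempty) ∧
    ∀ σ τ : Fin n → Bool, σ ≠ τ → ∀ k < n, Disjoint (closure (V σ) ×ˢ closure (V τ)) (S k)

lemma stepFam (hScl : ∀ n, IsClosed (S n)) (hSint : ∀ n, interior (S n) = ∅) {n : ℕ}
    (V : (Fin n → Bool) → Set X) (h : GoodFam S n V) :
    ∃ V' : (Fin (n+1) → Bool) → Set X, GoodFam S (n+1) V' ∧
      ∀ σ, closure (V' σ) ⊆ V (Fin.init σ) := by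
  classical
  set T : Finset ((Fin (n+1) → Bool) × (Fin (n+1) → Bool) × ℕ) :=
    (Finset.univ.filter
      (fun p : (Fin (n+1) → Bool) × (Fin (n+1) → Bool) × Fin (n+1) => p.1 ≠ p.2.1)).image
      (fun p => (p.1, p.2.1, (p.2.2 : ℕ))) with hT
  have hTprop : ∀ c ∈ T, c.1 ≠ c.2.1 := by
    intro c hc
    obtain ⟨p, hp, rfl⟩ := Finset.mem_image.mp hc
    exact (Finset.mem_filter.mp hp).2
  obtain ⟨W', h1, h2, h3, h4⟩ := avoid S hScl hSint T hTprop (fun σ => V (Fin.init σ))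
    (fun σ => h.1 _) (fun σ => h.2.1 _)
  have hx : ∀ σ : Fin (n+1) → Bool, ∃ O : Set X, IsOpen O ∧ O.Nonempty ∧ closure O ⊆ W' σ := by
    intro σ
    obtain ⟨x, hx⟩ := h2 σ
    obtain ⟨O, hO, hxO, hOsub⟩ := normal_exists_closure_subset isClosed_singleton (h1 σ)
      (singleton_subset_iff.mpr hx)
    exact ⟨O, hO, ⟨x, hxO rfl⟩, hOsub⟩
  choose V' hV'o hV'ne hV'sub using hx
  refine ⟨V', ⟨hV'o, hV'ne, ?_⟩, fun σ => (hV'sub σ).trans (h3 σ)⟩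
  intro σ τ hστ k hk
  have hmem : (σ, τ, k) ∈ T := by
    rw [hT]
    exact Finset.mem_image.mpr
      ⟨(σ, τ, ⟨k, hk⟩), Finset.mem_filter.mpr ⟨Finset.mem_univ _, hστ⟩, rfl⟩
  exact (h4 _ hmem).mono_left (prod_mono (hV'sub σ) (hV'sub τ))

lemma fusion [Nonempty X] (hScl : ∀ n, IsClosed (S n)) (hSint : ∀ n, interior (S n) = ∅) :
    ∃ g : (ℕ → Bool) → X, ∀ s t : ℕ → Bool, s ≠ t → ∀ k, (g s, g t) ∉ S k := by
  classical
  have base : GoodFam S 0 (fun _ => (univ : Set X)) :=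
    ⟨fun _ => isOpen_univ, fun _ => univ_nonempty,
      fun σ τ hστ k hk => absurd hk (Nat.not_lt_zero k)⟩
  choose stepF hstep1 hstep2 using fun (n : ℕ) (V : (Fin n → Bool) → Set X)
    (h : GoodFam S n V) => stepFam S hScl hSint V h
  let Ch : ∀ n : ℕ, {V : (Fin n → Bool) → Set X // GoodFam S n V} := fun n =>
    Nat.rec ⟨fun _ => univ, base⟩ (fun m p => ⟨stepF m p.1 p.2, hstep1 m p.1 p.2⟩) n
  have hnested : ∀ n (σ : Fin (n+1) → Bool),
      closure ((Ch (n+1)).1 σ) ⊆ (Ch n).1 (Fin.init σ) :=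
    fun n σ => hstep2 n (Ch n).1 (Ch n).2 σ
  set T : (ℕ → Bool) → ℕ → Set X := fun s n => closure ((Ch n).1 (fun i => s i)) with hTdef
  have hrestrict : ∀ (s : ℕ → Bool) (n : ℕ),
      Fin.init (fun i : Fin (n+1) => s i) = fun i : Fin n => s i := by
    intro s n; funext i; simp [Fin.init]
  have hmono : ∀ s n, T s (n+1) ⊆ T s n := by
    intro s n
    calc closure ((Ch (n+1)).1 (fun i : Fin (n+1) => s i))
        ⊆ (Ch n).1 (Fin.init (fun i : Fin (n+1) => s i)) := hnested n _
      _ = (Ch n).1 (fun i : Fin n => s i) := by rw [hrestrict]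
      _ ⊆ closure ((Ch n).1 (fun i : Fin n => s i)) := subset_closure
  have hne : ∀ s n, (T s n).Nonempty := fun s n => ((Ch n).2.2.1 _).mono subset_closure
  have hinter : ∀ s, (⋂ n, T s n).Nonempty := by
    intro s
    exact IsCompact.nonempty_iInter_of_sequence_nonempty_isCompact_isClosed (T s) (hmono s)
      (hne s) isClosed_closure.isCompact (fun n => isClosed_closure)
  choose g hg using hinter
  refine ⟨g, ?_⟩
  intro s t hst k
  obtain ⟨m, hm⟩ := Function.ne_iff.mp hst
  set M := max m k + 1 with hM
  have hσ : (fun i : Fin M => s i) ≠ (fun i : Fin M => t i) := by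
    intro h
    exact hm (congrFun h ⟨m, Nat.lt_succ_of_le (le_max_left m k)⟩)
  have hkM : k < M := Nat.lt_succ_of_le (le_max_right m k)
  have hdis := (Ch M).2.2.2 _ _ hσ k hkM
  intro hmem
  exact Set.disjoint_left.mp hdis
    (mk_mem_prod (mem_iInter.mp (hg s) M) (mem_iInter.mp (hg t) M)) hmem

end Fusion


open TopologicalSpace in
lemma exists_cantor [ConnectedSpace X] [Nontrivial X] [SecondCountableTopology X]
    (hX : Indecomposable X) :
    ∃ g : (ℕ → Bool) → X, ∀ s t : ℕ → Bool, s ≠ t → ¬ Rel X (g s) (g t) := by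
  classical
  have hB := isBasis_countableBasis X
  have hBc := countable_countableBasis X
  have hBne : (countableBasis X).Nonempty := by
    obtain ⟨x⟩ : Nonempty X := inferInstance
    obtain ⟨B, hB1, hB2, hB3⟩ := hB.exists_subset_of_mem_open (mem_univ x) isOpen_univ
    exact ⟨B, hB1⟩
  obtain ⟨u, hu⟩ := hBc.exists_eq_range hBne
  have humem : ∀ n, u n ∈ countableBasis X := by
    intro n; rw [hu]; exact mem_range_self n
  have huopen : ∀ n, IsOpen (u n) := fun n => hB.isOpen (humem n)
  have hune : ∀ n, (u n).Nonempty := by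
    intro n
    rcases eq_empty_or_nonempty (u n) with h | h
    · exact absurd (h ▸ humem n) (empty_notMem_countableBasis X)
    · exact h
  set S : ℕ → Set (X × X) := fun n => relSet ((u n)ᶜ) with hS
  have hScl : ∀ n, IsClosed (S n) := fun n => isClosed_relSet (huopen n).isClosed_compl
  have hSint : ∀ n, interior (S n) = ∅ := fun n =>
    interior_relSet hX (huopen n).isClosed_compl (by simpa using hune n)
  obtain ⟨g, hg⟩ := fusion S hScl hSint
  refine ⟨g, fun s t hst hrel => ?_⟩
  obtain ⟨K, hK1, hK2, hK3, hK4, hK5⟩ := hrel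
  obtain ⟨p, hp⟩ := (ne_univ_iff_exists_notMem K).mp hK3
  obtain ⟨B, hBmem, hpB, hBsub⟩ :=
    hB.exists_subset_of_mem_open (show p ∈ Kᶜ from hp) hK1.isClosed.isOpen_compl
  rw [hu] at hBmem
  obtain ⟨n, hn⟩ := hBmem
  have hKF : K ⊆ (u n)ᶜ := by
    intro y hy hyu
    exact (hBsub (hn ▸ hyu)) hy
  have hmem : (g s, g t) ∈ S n :=
    ⟨hKF hK4, (hK2.isPreconnected.subset_connectedComponentIn hK4 hKF) hK5⟩
  exact hg s t hst n hmem


lemma metric_sep {Y : Type u} [MetricSpace Y] {A B : Set Y} (hA : A.Nonempty) (hB : B.Nonempty)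
    (h1 : Disjoint (closure A) B) (h2 : Disjoint A (closure B)) :
    ∃ U V : Set Y, IsOpen U ∧ IsOpen V ∧ A ⊆ U ∧ B ⊆ V ∧ Disjoint U V := by
  refine ⟨{x | Metric.infDist x A < Metric.infDist x B},
    {x | Metric.infDist x B < Metric.infDist x A}, ?_, ?_, ?_, ?_, ?_⟩
  · exact isOpen_lt (Metric.continuous_infDist_pt A) (Metric.continuous_infDist_pt B)
  · exact isOpen_lt (Metric.continuous_infDist_pt B) (Metric.continuous_infDist_pt A)
  · intro a ha
    have h0 : Metric.infDist a A = 0 := Metric.infDist_zero_of_mem ha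
    have hpos : 0 < Metric.infDist a (closure B) :=
      (IsClosed.notMem_iff_infDist_pos isClosed_closure hB.closure).mp
        (disjoint_left.mp h2 ha)
    rw [Metric.infDist_closure] at hpos
    show Metric.infDist a A < Metric.infDist a B
    rw [h0]; exact hpos
  · intro b hb
    have h0 : Metric.infDist b B = 0 := Metric.infDist_zero_of_mem hb
    have hpos : 0 < Metric.infDist b (closure A) :=
      (IsClosed.notMem_iff_infDist_pos isClosed_closure hA.closure).mp
        (disjoint_right.mp h1 hb)
    rw [Metric.infDist_closure] at hpos
    show Metric.infDist b B < Metric.infDist b A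
    rw [h0]; exact hpos
  · rw [Set.disjoint_left]
    intro x hx hx'
    simp only [mem_setOf_eq] at hx hx'
    exact lt_asymm hx hx'

lemma setNat_embed : ∃ j : (Set ℕ × Set ℕ) → (ℕ → Bool), Function.Injective j := by
  classical
  refine ⟨fun p n => if Even n then decide (n / 2 ∈ p.1) else decide (n / 2 ∈ p.2), ?_⟩
  intro p q h
  have h1 : p.1 = q.1 := by
    ext m
    have e : Even (2 * m) := ⟨m, two_mul m⟩
    have d : 2 * m / 2 = m := by omega
    have hh := congrFun h (2 * m)
    dsimp only at hh
    rw [if_pos e, if_pos e, d] at hh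
    exact decide_eq_decide.mp hh
  have h2 : p.2 = q.2 := by
    ext m
    have e : ¬ Even (2 * m + 1) := by rintro ⟨r, hr⟩; omega
    have d : (2 * m + 1) / 2 = m := by omega
    have hh := congrFun h (2 * m + 1)
    dsimp only at hh
    rw [if_neg e, if_neg e, d] at hh
    exact decide_eq_decide.mp hh
  exact Prod.ext h1 h2

end IndecompAux


/-- Every nondegenerate metrizable indecomposable continuum has a dense
widely-connected subset. -/
theorem metrizable_indecomposable_has_dense_widely_connected {X : Type u}
    [TopologicalSpace X] [TopologicalSpace.MetrizableSpace X]
    [CompactSpace X] [T2Space X] [ConnectedSpace X] [Nontrivial X]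
    (hX : Indecomposable X) :
    ∃ W : Set X, Dense W ∧ WidelyConnectedSubset W := by
  classical
  letI : MetricSpace X := TopologicalSpace.metrizableSpaceMetric X
  haveI : TopologicalSpace.SeparableSpace X :=
    TopologicalSpace.isSeparable_univ_iff.mp isCompact_univ.isSeparable
  haveI : SecondCountableTopology X :=
    UniformSpace.secondCountable_of_separable X
  obtain ⟨g, hg⟩ := IndecompAux.exists_cantor hX
  obtain ⟨j, hj⟩ := IndecompAux.setNat_embed
  have hbasis := TopologicalSpace.isBasis_countableBasis X
  have hBne : (TopologicalSpace.countableBasis X).Nonempty := by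
    obtain ⟨x⟩ : Nonempty X := inferInstance
    obtain ⟨B, hB1, hB2, hB3⟩ := hbasis.exists_subset_of_mem_open (mem_univ x) isOpen_univ
    exact ⟨B, hB1⟩
  obtain ⟨u, hu⟩ := (TopologicalSpace.countable_countableBasis X).exists_eq_range hBne
  have humem : ∀ n, u n ∈ TopologicalSpace.countableBasis X := by
    intro n; rw [hu]; exact mem_range_self n
  have hsUnion : ∀ U : Set X, IsOpen U → U = ⋃₀ (u '' {n | u n ⊆ U}) := by
    intro U hU
    apply Subset.antisymm
    · intro x hx
      obtain ⟨B, hB1, hB2, hB3⟩ := hbasis.exists_subset_of_mem_open hx hU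
      rw [hu] at hB1
      obtain ⟨n, rfl⟩ := hB1
      exact ⟨u n, ⟨n, hB3, rfl⟩, hB2⟩
    · rintro x ⟨s, ⟨n, hn, rfl⟩, hx⟩
      exact hn hx
  set ι := {p : Set X × Set X //
    IsOpen p.1 ∧ IsOpen p.2 ∧ p.1.Nonempty ∧ p.2.Nonempty ∧ Disjoint p.1 p.2} with hιdef
  set c : ι → X := fun i => g (j ({n | u n ⊆ i.1.1}, {n | u n ⊆ i.1.2})) with hcdef
  have hc : ∀ i i' : ι, i ≠ i' → ¬ IndecompAux.Rel X (c i) (c i') := by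
    intro i i' hne
    apply hg
    intro hjeq
    apply hne
    have hpair := hj hjeq
    have h1 := congrArg Prod.fst hpair
    have h2 := congrArg Prod.snd hpair
    dsimp only at h1 h2
    apply Subtype.ext
    apply Prod.ext
    · rw [hsUnion i.1.1 i.2.1, h1, ← hsUnion i'.1.1 i'.2.1]
    · rw [hsUnion i.1.2 i.2.2.1, h2, ← hsUnion i'.1.2 i'.2.2.1]
  have hsep : ∀ i : ι, ∃ z, IndecompAux.Rel X (c i) z ∧ z ∉ i.1.1 ∪ i.1.2 := fun i =>
    IndecompAux.rel_separator hX (c i) i.2.1 i.2.2.1 i.2.2.2.1 i.2.2.2.2.1 i.2.2.2.2.2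
  choose f hf1 hf2 using hsep
  set W : Set X := range f with hWdef
  have key : ∀ i i' : ι, IndecompAux.Rel X (f i) (f i') → i = i' := by
    intro i i' hrel
    by_contra hne
    exact hc i i' hne (((hf1 i).trans hX hrel).trans hX (hf1 i').symm)
  -- two distinct elements of ι
  obtain ⟨x0, y0, hxy⟩ := exists_pair_ne X
  obtain ⟨U0, V0, hU0, hV0, hxU0, hyV0, hUV0⟩ := t2_separation hxy
  set i1 : ι := ⟨(U0, V0), hU0, hV0, ⟨x0, hxU0⟩, ⟨y0, hyV0⟩, hUV0⟩ with hi1def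
  set i2 : ι := ⟨(V0, U0), hV0, hU0, ⟨y0, hyV0⟩, ⟨x0, hxU0⟩, hUV0.symm⟩ with hi2def
  have hi12 : i1 ≠ i2 := by
    intro h
    have hUV : U0 = V0 := congrArg (fun i : ι => i.1.1) h
    exact disjoint_left.mp hUV0 hxU0 (hUV ▸ hxU0)
  have hWnt : W.Nontrivial := by
    refine ⟨f i1, mem_range_self _, f i2, mem_range_self _, fun h => ?_⟩
    exact hi12 (key i1 i2 (h ▸ IndecompAux.Rel.refl (f i1)))
  have hclosure : ∀ A : Set X, A ⊆ W → A.Nontrivial → IsPreconnected A → closure A = univ := by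
    intro A hAW hAnt hAconn
    by_contra hne
    obtain ⟨a, haA, b, hbA, hab⟩ := hAnt
    obtain ⟨i, rfl⟩ := hAW haA
    obtain ⟨i', rfl⟩ := hAW hbA
    refine hab (congrArg f (key i i' ?_))
    exact ⟨closure A, isClosed_closure.isCompact,
      ⟨⟨f i, subset_closure haA⟩, hAconn.closure⟩, hne,
      subset_closure haA, subset_closure hbA⟩
  have hWconn : IsConnected W := by
    refine ⟨⟨f i1, mem_range_self _⟩, ?_⟩
    intro U V hU hV hWUV hWU hWV
    by_contra hcon
    have hempty : W ∩ (U ∩ V) = ∅ := not_nonempty_iff_eq_empty.mp hcon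
    set A := W ∩ U with hAdef
    set B := W ∩ V with hBdef
    have hAB1 : Disjoint (closure A) B := by
      rw [Set.disjoint_left]
      intro b hbcl hbB
      obtain ⟨y, hyV, hyA⟩ := mem_closure_iff.mp hbcl V hV hbB.2
      have hy : y ∈ W ∩ (U ∩ V) := ⟨hyA.1, hyA.2, hyV⟩
      have h0 : y ∈ (∅ : Set X) := hempty ▸ hy
      exact h0
    have hAB2 : Disjoint A (closure B) := by
      rw [Set.disjoint_right]
      intro a hacl haA
      obtain ⟨y, hyU, hyB⟩ := mem_closure_iff.mp hacl U hU haA.2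
      have hy : y ∈ W ∩ (U ∩ V) := ⟨hyB.1, hyU, hyB.2⟩
      have h0 : y ∈ (∅ : Set X) := hempty ▸ hy
      exact h0
    obtain ⟨U', V', hU', hV', hAU', hBV', hU'V'⟩ :=
      IndecompAux.metric_sep hWU hWV hAB1 hAB2
    have hAne : A.Nonempty := hWU
    have hBne : B.Nonempty := hWV
    set i' : ι := ⟨(U', V'), hU', hV', hAne.mono hAU', hBne.mono hBV', hU'V'⟩ with hi'def
    have hmem : f i' ∈ U' ∪ V' := by
      have hfW : f i' ∈ W := mem_range_self _
      rcases hWUV hfW with h | h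
      · exact Or.inl (hAU' ⟨hfW, h⟩)
      · exact Or.inr (hBV' ⟨hfW, h⟩)
    exact hf2 i' hmem
  refine ⟨W, ?_, hWconn, ?_⟩
  · rw [dense_iff_closure_eq]
    exact hclosure W Subset.rfl hWnt hWconn.isPreconnected
  · intro A hA h1 h2
    rw [hclosure A hA h1 h2]
    exact subset_univ W
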